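/- Let ({σ, σ'}, e) be an almost-d-simplex (d ≥ 2) in a simple directed graph. Then the graph G = (V, E) with V = Ver(σ) ∪ Ver(σ') and E = Edg(σ) ∪ Edg(σ') (i.e. the almost-d-simplex without its missing edge e) contains no d-simplex. -/
import Mathlib


def IsSimplex {V : Type*} (E : V → V → Prop) {m : ℕ} (σ : Fin m → V) : Prop :=
  Function.Injective σ ∧ ∀ i j : Fin m, i < j → E (σ i) (σ j)

def EdgSet {V : Type*} {m : ℕ} (σ : Fin m → V) : Set (V × V) :=
  {p | ∃ i j : Fin m, i < j ∧ p = (σ i, σ j)}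

def IsAlmostSimplex {V : Type*} (E : V → V → Prop) {m : ℕ}
    (σ σ' : Fin (m + 1) → V) (e : V × V) : Prop :=
  IsSimplex E σ ∧ IsSimplex E σ' ∧
  ∃ i i' : Fin (m + 1),
    σ ∘ i.succAbove = σ' ∘ i'.succAbove ∧
    σ i ≠ σ' i' ∧
    ((i ≤ i' ∧ e = (σ i, σ' i')) ∨ (i' ≤ i ∧ e = (σ' i', σ i)))

/-- Let `({σ, σ'}, e)` be an almost-`d`-simplex (`d = n+2 ≥ 2`) in a simple directed
graph. Then the graph with vertices `Ver(σ) ∪ Ver(σ')` and edges `Edg(σ) ∪ Edg(σ')`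
(the almost-`d`-simplex without its missing edge `e`) contains no `d`-simplex. -/
theorem almost_simplex_without_missing_edge_has_no_simplex {V : Type*} [Fintype V]
    (E : V → V → Prop) (hE : Irreflexive E)
    (n : ℕ) (σ σ' : Fin (n + 2) → V) (e : V × V)
    (h : IsAlmostSimplex E σ σ' e) :
    ∀ τ : Fin (n + 3) → V,
      ¬ IsSimplex (fun a b => (a, b) ∈ EdgSet σ ∪ EdgSet σ') τ := by
  classical
  rintro τ ⟨hτinj, hτedge⟩
  obtain ⟨⟨hσinj, -⟩, ⟨hσ'inj, -⟩, i, i', hcom, hne, -⟩ := h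
  have hcom' : ∀ j, σ (i.succAbove j) = σ' (i'.succAbove j) := fun j => congrFun hcom j
  -- σ' i' is not a vertex of σ
  have h1 : ∀ k, σ' i' ≠ σ k := by
    intro k hk
    rcases eq_or_ne k i with rfl | hki
    · exact hne hk.symm
    · obtain ⟨j, rfl⟩ := Fin.exists_succAbove_eq hki
      exact i'.succAbove_ne j (hσ'inj (hk.trans (hcom' j))).symm
  -- σ i is not a vertex of σ'
  have h2 : ∀ k, σ i ≠ σ' k := by
    intro k hk
    rcases eq_or_ne k i' with rfl | hki
    · exact hne hk
    · obtain ⟨j, rfl⟩ := Fin.exists_succAbove_eq hki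
      exact i.succAbove_ne j (hσinj (hk.trans (hcom' j).symm)).symm
  set S : Finset V := insert (σ' i') (Finset.univ.image σ) with hS
  have hσS : ∀ m, σ m ∈ S :=
    fun m => Finset.mem_insert_of_mem (Finset.mem_image_of_mem σ (Finset.mem_univ m))
  have hσ'S : ∀ m, σ' m ∈ S := by
    intro m
    rcases eq_or_ne m i' with rfl | hm
    · exact Finset.mem_insert_self _ _
    · obtain ⟨j, rfl⟩ := Fin.exists_succAbove_eq hm
      rw [← hcom' j]; exact hσS _
  have hedgeS : ∀ a b : V, (a, b) ∈ EdgSet σ ∪ EdgSet σ' → a ∈ S ∧ b ∈ S := by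
    rintro a b (⟨p, q, -, hpq⟩ | ⟨p, q, -, hpq⟩) <;>
      obtain ⟨rfl, rfl⟩ := Prod.mk.injEq .. ▸ hpq <;>
      exact ⟨by first | exact hσS p | exact hσ'S p, by first | exact hσS q | exact hσ'S q⟩
  have hτS : ∀ k, τ k ∈ S := by
    intro k
    rcases eq_or_ne k 0 with rfl | hk
    · exact (hedgeS _ _ (hτedge 0 1 (by simp [Fin.lt_def]))).1
    · exact (hedgeS _ _ (hτedge 0 k (Fin.pos_of_ne_zero hk))).2
  have hTsub : Finset.univ.image τ ⊆ S := by
    intro x hx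
    obtain ⟨k, -, rfl⟩ := Finset.mem_image.mp hx
    exact hτS k
  have hScard : S.card ≤ n + 3 := by
    calc S.card ≤ (Finset.univ.image σ).card + 1 := Finset.card_insert_le _ _
    _ ≤ Finset.univ.card + 1 := by
        exact Nat.add_le_add_right (Finset.card_image_le) 1
    _ = n + 3 := by simp
  have hTcard : (Finset.univ.image τ).card = n + 3 := by
    rw [Finset.card_image_of_injective _ hτinj]; simp
  have hST : S = Finset.univ.image τ :=
    (Finset.eq_of_subset_of_card_le hTsub (by omega)).symm
  -- σ i and σ' i' are both in the image of τ
  obtain ⟨a, -, ha⟩ := Finset.mem_image.mp (hST ▸ hσS i)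
  obtain ⟨b, -, hb⟩ := Finset.mem_image.mp (hST ▸ hσ'S i')
  have hab : a ≠ b := fun hab => hne (by rw [← ha, ← hb, hab])
  rcases lt_or_gt_of_ne hab with hlt | hlt
  · rcases hτedge a b hlt with ⟨p, q, -, hpq⟩ | ⟨p, q, -, hpq⟩ <;>
      obtain ⟨h1', h2'⟩ := Prod.mk.injEq .. ▸ hpq
    · exact h1 q (hb ▸ h2')
    · exact h2 p (ha ▸ h1')
  · rcases hτedge b a hlt with ⟨p, q, -, hpq⟩ | ⟨p, q, -, hpq⟩ <;>
      obtain ⟨h1', h2'⟩ := Prod.mk.injEq .. ▸ hpq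
    · exact h1 p (hb ▸ h1')
    · exact h2 q (ha ▸ h2')
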